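/- Let G be an MDP graph, and let G' be an induced subgraph of G obtained by removing a set of vertices, each of which belongs to no end-component of G. Suppose every strongly connected component C of G' satisfies: for every u ∈ C ∩ VP and every edge uv ∈ E(G), v ∈ C. Then the nontrivial strongly connected components of G' are exactly the maximal end-components of G. -/

import Mathlib

/-- Reachability within a vertex set `Q` (reflexive-transitive). -/
def ReachIn {V : Type*} (E : V → V → Prop) (Q : Set V) : V → V → Prop :=
  Relation.ReflTransGen (fun x y => x ∈ Q ∧ y ∈ Q ∧ E x y)

/-- A set `U` induces a strongly connected subgraph: every vertex reaches every
other by a (nonempty) directed path inside `U`. -/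
def StronglyConnectedIn {V : Type*} (E : V → V → Prop) (U : Set V) : Prop :=
  ∀ u ∈ U, ∀ v ∈ U, Relation.TransGen (fun x y => x ∈ U ∧ y ∈ U ∧ E x y) u v

/-- An end-component of an MDP graph. -/
def IsEndComponent {V : Type*} (E : V → V → Prop) (VP : Set V) (U : Set V) : Prop :=
  U.Nonempty ∧ StronglyConnectedIn E U ∧ (∀ u ∈ U, u ∈ VP → ∀ v, E u v → v ∈ U)

/-- A maximal end-component. -/
def IsMEC {V : Type*} (E : V → V → Prop) (VP : Set V) (U : Set V) : Prop :=
  IsEndComponent E VP U ∧ ∀ U', IsEndComponent E VP U' → U ⊆ U' → U' = U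

/-- The strongly connected component of `v` in the subgraph of `G` induced on the
complement of the removed set `R`. -/
def SccOf {V : Type*} (E : V → V → Prop) (R : Set V) (v : V) : Set V :=
  {u | u ∈ Rᶜ ∧ ReachIn E Rᶜ u v ∧ ReachIn E Rᶜ v u}

lemma reachIn_to_inC {V : Type*} (E : V → V → Prop) (R : Set V) (v : V)
    {u : V} (hu : u ∈ SccOf E R v) :
    ∀ {w}, ReachIn E Rᶜ u w → w ∈ SccOf E R v →
      Relation.ReflTransGen
        (fun x y => x ∈ SccOf E R v ∧ y ∈ SccOf E R v ∧ E x y) u w := by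
  intro w h
  induction h with
  | refl => intro _; exact .refl
  | @tail b c hp step ih =>
    intro hc
    have hb : b ∈ SccOf E R v :=
      ⟨step.1, ((Relation.ReflTransGen.single step : ReachIn E Rᶜ b c).trans hc.2.1), hu.2.2.trans hp⟩
    exact (ih hb).tail ⟨hb, hc, step.2.2⟩

lemma scc_strong {V : Type*} (E : V → V → Prop) (R : Set V) (v : V)
    {a b : V} (ha : a ∈ SccOf E R v) (hb : b ∈ SccOf E R v) (hE : E a b) :
    StronglyConnectedIn E (SccOf E R v) := by
  intro u hu w hw
  have h1 := reachIn_to_inC E R v hu (hu.2.1.trans ha.2.2) ha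
  have h2 := reachIn_to_inC E R v hb (hb.2.1.trans hw.2.2) hw
  exact Relation.TransGen.trans_right h1 (Relation.TransGen.head' ⟨ha, hb, hE⟩ h2)

lemma ec_reach {V : Type*} {E : V → V → Prop} {VP R : Set V} {U : Set V}
    (hU : IsEndComponent E VP U) (hUR : U ⊆ Rᶜ) {u w : V}
    (hu : u ∈ U) (hw : w ∈ U) : ReachIn E Rᶜ u w :=
  Relation.ReflTransGen.mono (p := fun x y => x ∈ Rᶜ ∧ y ∈ Rᶜ ∧ E x y)
    (fun _ _ h => ⟨hUR h.1, hUR h.2.1, h.2.2⟩) _ _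
    (hU.2.1 u hu w hw).to_reflTransGen

/-- Correctness of Algorithm 1 (MEC decomposition): if every removed vertex
belongs to no end-component of `G`, and every SCC `C` of the remaining graph `G'`
satisfies that all `G`-edges leaving probabilistic vertices of `C` stay in `C`,
then the nontrivial SCCs of `G'` are exactly the maximal end-components of `G`. -/
theorem stmt11 {V : Type*} [Fintype V] (E : V → V → Prop) (V1 VP : Set V)
    (hpart : ∀ v, (v ∈ V1 ∧ v ∉ VP) ∨ (v ∉ V1 ∧ v ∈ VP))
    (R : Set V)
    (hR : ∀ r ∈ R, ∀ U : Set V, IsEndComponent E VP U → r ∉ U)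
    (hclosed : ∀ v ∈ Rᶜ, ∀ u ∈ SccOf E R v, u ∈ VP → ∀ w, E u w → w ∈ SccOf E R v) :
    {C | ∃ v ∈ Rᶜ, C = SccOf E R v ∧ ∃ a ∈ C, ∃ b ∈ C, E a b} =
      {M | IsMEC E VP M} := by
  have compl_of_ec : ∀ U : Set V, IsEndComponent E VP U → U ⊆ Rᶜ := by
    intro U hU r hr
    by_contra hrR
    exact hR r (not_not.mp fun h => hrR h) U hU hr
  ext C
  simp only [Set.mem_setOf_eq]
  constructor
  · rintro ⟨v, hv, rfl, a, ha, b, hb, hE⟩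
    have hvC : v ∈ SccOf E R v := ⟨hv, .refl, .refl⟩
    have hEC : IsEndComponent E VP (SccOf E R v) :=
      ⟨⟨v, hvC⟩, scc_strong E R v ha hb hE,
        fun u hu huP w hw => hclosed v hv u hu huP w hw⟩
    refine ⟨hEC, fun U' hU' hsub => ?_⟩
    have hUR : U' ⊆ Rᶜ := compl_of_ec U' hU'
    have hUC : U' ⊆ SccOf E R v := fun u hu =>
      ⟨hUR hu, ec_reach hU' hUR hu (hsub hvC), ec_reach hU' hUR (hsub hvC) hu⟩
    exact subset_antisymm hUC hsub
  · rintro ⟨hM, hmax⟩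
    obtain ⟨v, hv⟩ := hM.1
    have hMR : C ⊆ Rᶜ := compl_of_ec C hM
    have hvR : v ∈ Rᶜ := hMR hv
    have hsub : C ⊆ SccOf E R v := fun u hu =>
      ⟨hMR hu, ec_reach hM hMR hu hv, ec_reach hM hMR hv hu⟩
    obtain ⟨b, hvb, -⟩ := Relation.TransGen.head'_iff.mp (hM.2.1 v hv v hv)
    have hEC : IsEndComponent E VP (SccOf E R v) :=
      ⟨⟨v, hsub hv⟩, scc_strong E R v (hsub hvb.1) (hsub hvb.2.1) hvb.2.2,
        fun u hu huP w hw => hclosed v hvR u hu huP w hw⟩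
    have heq : SccOf E R v = C := hmax _ hEC hsub
    exact ⟨v, hvR, heq.symm, v, hv, b, hvb.2.1, hvb.2.2⟩
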